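/- Let p ∈ (1, 2] and let (ξ_i)_{i=1}^N be a martingale difference sequence with respect to a filtration (F_i) (i.e., each ξ_i is F_i-measurable, integrable, and E[ξ_i | F_{i−1}] = 0) with E[|ξ_i|^p] < ∞ for all i. Then E[|∑_{i=1}^N ξ_i|^p] ≤ 2 · ∑_{i=1}^N E[|ξ_i|^p]. -/

import Mathlib

open MeasureTheory
open scoped NNReal ENNReal

/-- Subadditivity of `x ^ q` for `0 ≤ q ≤ 1` on nonnegative reals. -/
lemma vbe_subadd {q : ℝ} (hq0 : 0 ≤ q) (hq1 : q ≤ 1) {a b : ℝ} (ha : 0 ≤ a) (hb : 0 ≤ b) :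
    (a + b) ^ q ≤ a ^ q + b ^ q := by
  have h := NNReal.rpow_add_le_add_rpow a.toNNReal b.toNNReal hq0 hq1
  have hab : ((a.toNNReal + b.toNNReal : ℝ≥0) : ℝ) = a + b := by
    push_cast
    rw [Real.coe_toNNReal _ ha, Real.coe_toNNReal _ hb]
  calc (a + b) ^ q = (((a.toNNReal + b.toNNReal) ^ q : ℝ≥0) : ℝ) := by
        rw [NNReal.coe_rpow, hab]
    _ ≤ ((a.toNNReal ^ q + b.toNNReal ^ q : ℝ≥0) : ℝ) := by exact_mod_cast h
    _ = a ^ q + b ^ q := by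
        push_cast [NNReal.coe_rpow]
        rw [Real.coe_toNNReal _ ha, Real.coe_toNNReal _ hb]

/-- `x ^ (p-1) * x = x ^ p` for nonnegative `x` and `p > 1`. -/
lemma vbe_rpow_mul_self {p : ℝ} (hp1 : 1 < p) {x : ℝ} (hx : 0 ≤ x) :
    x ^ (p - 1) * x = x ^ p := by
  rcases hx.eq_or_lt with rfl | hx
  · rw [Real.zero_rpow (by linarith : p - 1 ≠ 0), Real.zero_rpow (by linarith : p ≠ 0), zero_mul]
  · rw [← Real.rpow_add_one hx.ne' (p - 1), sub_add_cancel]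

/-- Convexity gradient inequality for `x ↦ x ^ p`. -/
lemma vbe_grad {p : ℝ} (hp1 : 1 < p) {u v : ℝ} (hu : 0 ≤ u) (hv : 0 ≤ v) :
    u ^ p + p * u ^ (p - 1) * (v - u) ≤ v ^ p := by
  rcases hu.eq_or_lt with rfl | hu
  · rw [Real.zero_rpow (by linarith : p ≠ 0), Real.zero_rpow (by linarith : p - 1 ≠ 0)]
    simpa using Real.rpow_nonneg hv p
  · have hs : (-1 : ℝ) ≤ v / u - 1 := by
      have : 0 ≤ v / u := div_nonneg hv hu.le
      linarith
    have hB := one_add_mul_self_le_rpow_one_add hs hp1.le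
    have h1 : 1 + (v / u - 1) = v / u := by ring
    rw [h1, Real.div_rpow hv hu.le] at hB
    have hup : (0:ℝ) < u ^ p := Real.rpow_pos_of_pos hu p
    have h2 : u ^ p * (1 + p * (v / u - 1)) ≤ v ^ p := by
      have h := mul_le_mul_of_nonneg_left hB hup.le
      rwa [mul_div_cancel₀ _ hup.ne'] at h
    have key : u ^ p + p * u ^ (p - 1) * (v - u) = u ^ p * (1 + p * (v / u - 1)) := by
      rw [Real.rpow_sub_one hu.ne']
      field_simp
    linarith [key ▸ h2]

/-- The "derivative" function `x ↦ p * sign x * |x| ^ (p-1)`, written without `sign`. -/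
noncomputable def vbeG (p : ℝ) : ℝ → ℝ :=
  fun x => p * max x 0 ^ (p - 1) - p * max (-x) 0 ^ (p - 1)

lemma vbeG_of_nonneg {p : ℝ} (hp1 : 1 < p) {a : ℝ} (ha : 0 ≤ a) :
    vbeG p a = p * a ^ (p - 1) := by
  rw [vbeG, max_eq_left ha, max_eq_right (by linarith : -a ≤ 0),
    Real.zero_rpow (by linarith : p - 1 ≠ 0), mul_zero, sub_zero]

lemma vbeG_of_neg {p : ℝ} (hp1 : 1 < p) {a : ℝ} (ha : a < 0) :
    vbeG p a = -(p * (-a) ^ (p - 1)) := by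
  rw [vbeG, max_eq_right ha.le, max_eq_left (by linarith : (0:ℝ) ≤ -a),
    Real.zero_rpow (by linarith : p - 1 ≠ 0), mul_zero, zero_sub]

lemma vbeG_continuous {p : ℝ} (hp1 : 1 < p) : Continuous (vbeG p) := by
  have h : (0:ℝ) ≤ p - 1 := by linarith
  exact (continuous_const.mul ((Real.continuous_rpow_const h).comp
      (continuous_id.max continuous_const))).sub
    (continuous_const.mul ((Real.continuous_rpow_const h).comp
      (continuous_neg.max continuous_const)))

lemma vbeG_abs_le {p : ℝ} (hp1 : 1 < p) (a : ℝ) : |vbeG p a| ≤ p * |a| ^ (p - 1) := by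
  have hp0 : (0:ℝ) < p := by linarith
  rcases le_or_gt 0 a with ha | ha
  · rw [vbeG_of_nonneg hp1 ha, abs_of_nonneg ha,
      abs_of_nonneg (mul_nonneg hp0.le (Real.rpow_nonneg ha _))]
  · rw [vbeG_of_neg hp1 ha, abs_of_neg ha, abs_neg,
      abs_of_nonneg (mul_nonneg hp0.le (Real.rpow_nonneg (by linarith) _))]

/-- Young-type bound. -/
lemma vbe_young {p : ℝ} (hp1 : 1 < p) {x y : ℝ} (hx : 0 ≤ x) (hy : 0 ≤ y) :
    x ^ (p - 1) * y ≤ x ^ p + y ^ p := by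
  rcases le_total y x with h | h
  · calc x ^ (p - 1) * y ≤ x ^ (p - 1) * x :=
          mul_le_mul_of_nonneg_left h (Real.rpow_nonneg hx _)
      _ = x ^ p := vbe_rpow_mul_self hp1 hx
      _ ≤ x ^ p + y ^ p := le_add_of_nonneg_right (Real.rpow_nonneg hy _)
  · calc x ^ (p - 1) * y ≤ y ^ (p - 1) * y :=
          mul_le_mul_of_nonneg_right (Real.rpow_le_rpow hx h (by linarith)) hy
      _ = y ^ p := vbe_rpow_mul_self hp1 hy
      _ ≤ x ^ p + y ^ p := le_add_of_nonneg_left (Real.rpow_nonneg hx _)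

/-- Crude bound used for integrability. -/
lemma vbe_two_bound {p : ℝ} (hp0 : 0 ≤ p) (a b : ℝ) :
    |a + b| ^ p ≤ 2 ^ p * (|a| ^ p + |b| ^ p) := by
  have h1 : |a + b| ≤ 2 * max |a| |b| := by
    refine (abs_add_le a b).trans ?_
    have := le_max_left |a| |b|
    have := le_max_right |a| |b|
    linarith
  have h2 : |a + b| ^ p ≤ (2 * max |a| |b|) ^ p :=
    Real.rpow_le_rpow (abs_nonneg _) h1 hp0
  have h3 : (2 * max |a| |b|) ^ p = 2 ^ p * (max |a| |b|) ^ p :=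
    Real.mul_rpow (by norm_num) (le_max_of_le_left (abs_nonneg a))
  have h4 : (max |a| |b|) ^ p ≤ |a| ^ p + |b| ^ p := by
    rcases max_choice |a| |b| with h | h <;> rw [h]
    · exact le_add_of_nonneg_right (Real.rpow_nonneg (abs_nonneg _) _)
    · exact le_add_of_nonneg_left (Real.rpow_nonneg (abs_nonneg _) _)
  calc |a + b| ^ p ≤ 2 ^ p * (max |a| |b|) ^ p := by rw [← h3]; exact h2
    _ ≤ 2 ^ p * (|a| ^ p + |b| ^ p) :=
        mul_le_mul_of_nonneg_left h4 (Real.rpow_nonneg (by norm_num) _)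

/-- Key pointwise inequality, nonnegative base case. -/
lemma vbe_key_nonneg {p : ℝ} (hp1 : 1 < p) (hp2 : p ≤ 2) {a : ℝ} (ha : 0 ≤ a) (b : ℝ) :
    |a + b| ^ p ≤ a ^ p + p * a ^ (p - 1) * b + 2 * |b| ^ p := by
  have hq0 : (0:ℝ) ≤ p - 1 := by linarith
  have hq1 : p - 1 ≤ 1 := by linarith
  have hp0 : (0:ℝ) < p := by linarith
  rcases le_or_gt 0 b with hb | hb
  · -- b ≥ 0
    rw [abs_of_nonneg (by linarith : (0:ℝ) ≤ a + b), abs_of_nonneg hb]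
    have hg := vbe_grad hp1 (by linarith : (0:ℝ) ≤ a + b) ha
    -- (a+b)^p + p (a+b)^{p-1} (a - (a+b)) ≤ a^p
    have hsub : (a + b) ^ (p - 1) ≤ a ^ (p - 1) + b ^ (p - 1) := vbe_subadd hq0 hq1 ha hb
    have hbb : b ^ (p - 1) * b = b ^ p := vbe_rpow_mul_self hp1 hb
    have h5 : p * (a + b) ^ (p - 1) * b ≤ p * (a ^ (p - 1) + b ^ (p - 1)) * b := by
      apply mul_le_mul_of_nonneg_right _ hb
      exact mul_le_mul_of_nonneg_left hsub hp0.le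
    have hbp : (0:ℝ) ≤ b ^ p := Real.rpow_nonneg hb _
    nlinarith [hg, h5, hbb, hbp]
  · rcases le_or_gt 0 (a + b) with h0 | h0
    · -- b < 0 ≤ a + b
      have hc : 0 < -b := by linarith
      rw [abs_of_nonneg h0, abs_of_neg hb]
      have hg := vbe_grad hp1 h0 ha
      -- (a+b)^p + p (a+b)^{p-1} (a - (a+b)) ≤ a^p
      have hsub : a ^ (p - 1) ≤ (a + b) ^ (p - 1) + (-b) ^ (p - 1) := by
        have h := vbe_subadd hq0 hq1 h0 hc.le
        have : a + b + -b = a := by ring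
        rwa [this] at h
      have hcc : (-b) ^ (p - 1) * (-b) = (-b) ^ p := vbe_rpow_mul_self hp1 hc.le
      have h4 : p * (-b) * a ^ (p - 1) ≤ p * (-b) * ((a + b) ^ (p - 1) + (-b) ^ (p - 1)) :=
        mul_le_mul_of_nonneg_left hsub (mul_nonneg hp0.le hc.le)
      have hbp : (0:ℝ) ≤ (-b) ^ p := Real.rpow_nonneg hc.le _
      nlinarith [hg, h4, hcc, hbp]
    · -- a + b < 0
      have hc : 0 < -b := by linarith
      rw [abs_of_neg h0, abs_of_neg hb]
      have hg := vbe_grad hp1 ha hc.le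
      -- a^p + p a^{p-1} (-b - a) ≤ (-b)^p
      have hmono : (-(a + b)) ^ p ≤ (-b) ^ p :=
        Real.rpow_le_rpow (by linarith) (by linarith) hp0.le
      have haa : a ^ (p - 1) * a = a ^ p := vbe_rpow_mul_self hp1 ha
      have hap : (0:ℝ) ≤ a ^ p := Real.rpow_nonneg ha _
      nlinarith [hg, hmono, haa, hap]

/-- Key pointwise inequality. -/
lemma vbe_key {p : ℝ} (hp1 : 1 < p) (hp2 : p ≤ 2) (a b : ℝ) :
    |a + b| ^ p ≤ |a| ^ p + vbeG p a * b + 2 * |b| ^ p := by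
  rcases le_or_gt 0 a with ha | ha
  · rw [vbeG_of_nonneg hp1 ha, abs_of_nonneg ha]
    exact vbe_key_nonneg hp1 hp2 ha b
  · have h := vbe_key_nonneg hp1 hp2 (by linarith : (0:ℝ) ≤ -a) (-b)
    rw [show -a + -b = -(a + b) by ring, abs_neg, abs_neg] at h
    rw [vbeG_of_neg hp1 ha, abs_of_neg ha]
    calc |a + b| ^ p ≤ (-a) ^ p + p * (-a) ^ (p - 1) * (-b) + 2 * |b| ^ p := h
      _ = (-a) ^ p + -(p * (-a) ^ (p - 1)) * b + 2 * |b| ^ p := by ring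

/-- Von Bahr–Esseen inequality for martingale differences: if `p ∈ (1,2]` and
`(ξ_i)_{i=1}^N` is a martingale difference sequence with `E[|ξ_i|^p] < ∞`, then
`E[|∑ ξ_i|^p] ≤ 2 ∑ E[|ξ_i|^p]`. -/
theorem von_bahr_esseen {Ω : Type*} {m0 : MeasurableSpace Ω} (P : Measure Ω)
    [IsProbabilityMeasure P] (p : ℝ) (hp1 : 1 < p) (hp2 : p ≤ 2)
    (N : ℕ) (ℱ : Filtration ℕ m0) (ξ : ℕ → Ω → ℝ)
    (hadapted : ∀ i, 1 ≤ i → i ≤ N → StronglyMeasurable[ℱ i] (ξ i))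
    (hint : ∀ i, 1 ≤ i → i ≤ N → Integrable (ξ i) P)
    (hmart : ∀ i, 1 ≤ i → i ≤ N → P[ξ i|ℱ (i - 1)] =ᵐ[P] (0 : Ω → ℝ))
    (hmom : ∀ i, 1 ≤ i → i ≤ N → Integrable (fun ω => |ξ i ω| ^ p) P) :
    (∫ ω, |∑ i ∈ Finset.Icc 1 N, ξ i ω| ^ p ∂P) ≤
      2 * ∑ i ∈ Finset.Icc 1 N, ∫ ω, |ξ i ω| ^ p ∂P := by
  have hp0 : (0:ℝ) < p := by linarith
  set S : ℕ → Ω → ℝ := fun n ω => ∑ i ∈ Finset.Icc 1 n, ξ i ω with hSdef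
  have hSmeas : ∀ n, n ≤ N → StronglyMeasurable[ℱ n] (S n) := by
    intro n hn
    apply Finset.stronglyMeasurable_fun_sum
    intro i hi
    rw [Finset.mem_Icc] at hi
    exact (hadapted i hi.1 (le_trans hi.2 hn)).mono (ℱ.mono hi.2)
  have habsS : ∀ n, n ≤ N → AEStronglyMeasurable (fun ω => |S n ω| ^ p) P := by
    intro n hn
    exact (((Real.continuous_rpow_const hp0.le).comp continuous_abs).comp_stronglyMeasurable
      ((hSmeas n hn).mono (ℱ.le n))).aestronglyMeasurable
  have claim : ∀ n, n ≤ N →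
      Integrable (fun ω => |S n ω| ^ p) P ∧
      (∫ ω, |S n ω| ^ p ∂P) ≤ 2 * ∑ i ∈ Finset.Icc 1 n, ∫ ω, |ξ i ω| ^ p ∂P := by
    intro n
    induction n with
    | zero =>
      intro _
      have h0 : (fun ω => |S 0 ω| ^ p) = fun _ => (0:ℝ) := by
        funext ω
        simp [hSdef, Real.zero_rpow hp0.ne']
      constructor
      · rw [h0]
        exact integrable_const 0
      · rw [h0]
        simp
    | succ n IH =>
      intro hn1
      obtain ⟨IHint, IHbound⟩ := IH (by omega)
      have hn : n ≤ N := by omega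
      have h1n : 1 ≤ n + 1 := by omega
      have hηint : Integrable (ξ (n+1)) P := hint (n+1) h1n hn1
      have hηmom : Integrable (fun ω => |ξ (n+1) ω| ^ p) P := hmom (n+1) h1n hn1
      have hSsucc : ∀ ω, S (n+1) ω = S n ω + ξ (n+1) ω := by
        intro ω
        exact Finset.sum_Icc_succ_top h1n _
      -- integrability of |S (n+1)|^p
      have hSn1int : Integrable (fun ω => |S (n+1) ω| ^ p) P := by
        refine (((IHint.add hηmom).const_mul ((2:ℝ) ^ p)).mono' (habsS (n+1) hn1)
          (Filter.Eventually.of_forall fun ω => ?_))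
        rw [Real.norm_eq_abs, abs_of_nonneg (Real.rpow_nonneg (abs_nonneg _) p), hSsucc ω]
        exact vbe_two_bound hp0.le _ _
      -- the derivative factor
      set G : Ω → ℝ := fun ω => vbeG p (S n ω) with hGdef
      have hGmeas : StronglyMeasurable[ℱ n] G :=
        (vbeG_continuous hp1).comp_stronglyMeasurable (hSmeas n hn)
      have hGη : Integrable (G * ξ (n+1)) P := by
        refine ((IHint.add hηmom).const_mul p).mono'
          (((hGmeas.mono (ℱ.le n)).aestronglyMeasurable).mul hηint.1)
          (Filter.Eventually.of_forall fun ω => ?_)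
        rw [Pi.mul_apply, Real.norm_eq_abs, abs_mul]
        calc |G ω| * |ξ (n+1) ω| ≤ (p * |S n ω| ^ (p-1)) * |ξ (n+1) ω| :=
              mul_le_mul_of_nonneg_right (vbeG_abs_le hp1 _) (abs_nonneg _)
          _ = p * (|S n ω| ^ (p-1) * |ξ (n+1) ω|) := by ring
          _ ≤ p * (|S n ω| ^ p + |ξ (n+1) ω| ^ p) :=
              mul_le_mul_of_nonneg_left (vbe_young hp1 (abs_nonneg _) (abs_nonneg _)) hp0.le
      -- orthogonality
      have hcond : P[ξ (n+1)|ℱ n] =ᵐ[P] (0 : Ω → ℝ) := by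
        have h := hmart (n+1) h1n hn1
        simpa using h
      have horth : (∫ ω, G ω * ξ (n+1) ω ∂P) = 0 := by
        have hmul : P[G * ξ (n+1)|ℱ n] =ᵐ[P] G * P[ξ (n+1)|ℱ n] :=
          condExp_mul_of_stronglyMeasurable_left hGmeas hGη hηint
        have h2 : P[G * ξ (n+1)|ℱ n] =ᵐ[P] (0 : Ω → ℝ) := by
          refine hmul.trans ?_
          filter_upwards [hcond] with ω hω
          simp [hω]
        calc (∫ ω, G ω * ξ (n+1) ω ∂P) = ∫ ω, (G * ξ (n+1)) ω ∂P := rfl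
          _ = ∫ ω, (P[G * ξ (n+1)|ℱ n]) ω ∂P := (integral_condExp (ℱ.le n)).symm
          _ = ∫ _ω, (0:ℝ) ∂P := integral_congr_ae h2
          _ = 0 := integral_zero _ _
      -- main estimate
      have hpt : ∀ ω, |S (n+1) ω| ^ p ≤ |S n ω| ^ p + G ω * ξ (n+1) ω + 2 * |ξ (n+1) ω| ^ p := by
        intro ω
        rw [hSsucc ω]
        exact vbe_key hp1 hp2 _ _
      have hGη' : Integrable (fun ω => G ω * ξ (n+1) ω) P := hGη
      have hRHS : Integrable (fun ω => |S n ω| ^ p + G ω * ξ (n+1) ω + 2 * |ξ (n+1) ω| ^ p) P :=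
        (IHint.add hGη').add (hηmom.const_mul 2)
      have hle : (∫ ω, |S (n+1) ω| ^ p ∂P) ≤
          ∫ ω, (|S n ω| ^ p + G ω * ξ (n+1) ω + 2 * |ξ (n+1) ω| ^ p) ∂P :=
        integral_mono hSn1int hRHS hpt
      have hf1 : Integrable (fun ω => |S n ω| ^ p + G ω * ξ (n+1) ω) P := IHint.add hGη'
      have hf2 : Integrable (fun ω => 2 * |ξ (n+1) ω| ^ p) P := hηmom.const_mul 2
      rw [integral_add hf1 hf2, integral_add IHint hGη', horth, integral_const_mul] at hle
      refine ⟨hSn1int, ?_⟩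
      rw [Finset.sum_Icc_succ_top h1n]
      have hrw : (2:ℝ) * (∑ i ∈ Finset.Icc 1 n, ∫ ω, |ξ i ω| ^ p ∂P + ∫ ω, |ξ (n+1) ω| ^ p ∂P)
          = 2 * ∑ i ∈ Finset.Icc 1 n, (∫ ω, |ξ i ω| ^ p ∂P) + 2 * ∫ ω, |ξ (n+1) ω| ^ p ∂P := by
        ring
      rw [hrw]
      linarith
  exact (claim N le_rfl).2
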